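/- Let V be a finite-dimensional complex inner product space and Λ a self-adjoint endomorphism of V. For every v ∈ V \ {0}, the function t ↦ log‖e^{tΛ} v‖ is convex on ℝ. -/

import Mathlib

open Filter Topology NormedSpace
open scoped LinearAlgebra.Projectivization

set_option linter.unusedSectionVars false

noncomputable section

namespace CSW

variable {E : Type*} [NormedAddCommGroup E] [InnerProductSpace ℂ E] [FiniteDimensional ℂ E]
variable {V : Type*} [NormedAddCommGroup V] [InnerProductSpace ℂ V] [FiniteDimensional ℂ V]

/-- The exponential `e^T` of a bounded operator, as a unit (invertible element) of the algebra
of continuous linear endomorphisms. -/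
def expUnit (T : E →L[ℂ] E) : (E →L[ℂ] E)ˣ where
  val := exp T
  inv := exp (-T)
  val_inv := by
    letI : NormedAlgebra ℚ (E →L[ℂ] E) := .restrictScalars ℚ ℂ _
    rw [← exp_add_of_commute (Commute.refl T).neg_right, add_neg_cancel, exp_zero]
  inv_val := by
    letI : NormedAlgebra ℚ (E →L[ℂ] E) := .restrictScalars ℚ ℂ _
    rw [← exp_add_of_commute (Commute.refl T).neg_left, neg_add_cancel, exp_zero]

/-- `Bseq A i` is `B_i = A_i A_{i-1}⁻¹` (with the junk value `B_0 = 1`). -/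
def Bseq (A : ℕ → (E →L[ℂ] E)ˣ) (i : ℕ) : (E →L[ℂ] E)ˣ := A i * (A (i - 1))⁻¹

/-- Condition (*): for any subsequence, after passing to a further subsequence, `B_{α+1}` and
`B_{α+2}` both converge (in operator norm) to `g e^Λ g⁻¹` for some unitary `g`. -/
def CondStar (A : ℕ → (E →L[ℂ] E)ˣ) (Λ : E →L[ℂ] E) : Prop :=
  ∀ φ : ℕ → ℕ, StrictMono φ → ∃ ψ : ℕ → ℕ, StrictMono ψ ∧ ∃ g : (E →L[ℂ] E)ˣ,
    (g : E →L[ℂ] E) ∈ unitary (E →L[ℂ] E) ∧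
    Tendsto (fun j => (Bseq A (φ (ψ j) + 1) : E →L[ℂ] E)) atTop
      (𝓝 ((g * expUnit Λ * g⁻¹ : (E →L[ℂ] E)ˣ) : E →L[ℂ] E)) ∧
    Tendsto (fun j => (Bseq A (φ (ψ j) + 2) : E →L[ℂ] E)) atTop
      (𝓝 ((g * expUnit Λ * g⁻¹ : (E →L[ℂ] E)ˣ) : E →L[ℂ] E))

/-- Condition (*)' for a given gauge sequence `g`: `g 0 = 1`, each `g i` is unitary,
`B_i g_i e^{-Λ} g_i⁻¹ → Id` and `g_{i-1}⁻¹ g_i → Id`. -/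
def CondStar' (A : ℕ → (E →L[ℂ] E)ˣ) (Λ : E →L[ℂ] E) (g : ℕ → (E →L[ℂ] E)ˣ) : Prop :=
  g 0 = 1 ∧ (∀ i, (g i : E →L[ℂ] E) ∈ unitary (E →L[ℂ] E)) ∧
  Tendsto (fun i => ((Bseq A i * g i * expUnit (-Λ) * (g i)⁻¹ : (E →L[ℂ] E)ˣ) : E →L[ℂ] E))
    atTop (𝓝 1) ∧
  Tendsto (fun i => (((g (i - 1))⁻¹ * g i : (E →L[ℂ] E)ˣ) : E →L[ℂ] E)) atTop (𝓝 1)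

/-- Membership in `G_Λ = {g ∈ G : g Λ g⁻¹ = Λ}`. -/
def InGΛ (Λ : E →L[ℂ] E) (h : (E →L[ℂ] E)ˣ) : Prop :=
  (h : E →L[ℂ] E) * Λ = Λ * (h : E →L[ℂ] E)

/-- Membership in `K_Λ = {g ∈ K : g Λ g⁻¹ = Λ}`. -/
def InKΛ (Λ : E →L[ℂ] E) (h : (E →L[ℂ] E)ˣ) : Prop :=
  (h : E →L[ℂ] E) ∈ unitary (E →L[ℂ] E) ∧ InGΛ Λ h

/-- A (continuous, finite-dimensional) complex representation `ρ` of `G = GL(E)` on a Hermitian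
vector space `V`, mapping unitary elements to unitary elements, together with a self-adjoint
operator `Λ_V` on `V` compatible with `Λ` via `ρ(e^{tΛ}) = e^{tΛ_V}`. -/
structure Rep (Λ : E →L[ℂ] E) (V : Type*) [NormedAddCommGroup V] [InnerProductSpace ℂ V]
    [FiniteDimensional ℂ V] where
  ρ : (E →L[ℂ] E)ˣ →* (V →L[ℂ] V)ˣ
  continuous_ρ : Continuous fun u : (E →L[ℂ] E)ˣ => ((ρ u : (V →L[ℂ] V)ˣ) : V →L[ℂ] V)
  unitary_ρ : ∀ u : (E →L[ℂ] E)ˣ, (u : E →L[ℂ] E) ∈ unitary (E →L[ℂ] E) →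
    ((ρ u : (V →L[ℂ] V)ˣ) : V →L[ℂ] V) ∈ unitary (V →L[ℂ] V)
  ΛV : V →L[ℂ] V
  selfAdjoint_ΛV : IsSelfAdjoint ΛV
  exp_eq : ∀ t : ℝ, ((ρ (expUnit ((t : ℂ) • Λ)) : (V →L[ℂ] V)ˣ) : V →L[ℂ] V)
      = exp ((t : ℂ) • ΛV)

variable {Λ : E →L[ℂ] E}

theorem unit_apply_ne_zero (u : (V →L[ℂ] V)ˣ) {v : V} (hv : v ≠ 0) :
    (u : V →L[ℂ] V) v ≠ 0 := by
  intro h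
  apply hv
  have h2 : (((u⁻¹ : (V →L[ℂ] V)ˣ) : V →L[ℂ] V) * (u : V →L[ℂ] V)) v = 0 := by
    rw [ContinuousLinearMap.mul_apply, h, map_zero]
  rwa [Units.inv_mul, ContinuousLinearMap.one_apply] at h2

theorem unit_apply_injective (u : (V →L[ℂ] V)ˣ) :
    Function.Injective ((u : V →L[ℂ] V) : V → V) := by
  intro a b hab
  have h2 := congrArg (fun x => ((u⁻¹ : (V →L[ℂ] V)ˣ) : V →L[ℂ] V) x) hab
  simpa [← ContinuousLinearMap.mul_apply, Units.inv_mul] using h2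

/-- `f_i(v) = log ‖ρ(A_i) v‖`. -/
def fseq (R : Rep Λ V) (A : ℕ → (E →L[ℂ] E)ˣ) (v : V) (i : ℕ) : ℝ :=
  Real.log ‖(R.ρ (A i) : V →L[ℂ] V) v‖

/-- The quotient topology on the projectivization of a topological vector space. -/
instance : TopologicalSpace (ℙ ℂ V) := instTopologicalSpaceQuotient

/-- The natural action of `GL(E)` on `ℙ(V)` through the representation `R`. -/
def pact (R : Rep Λ V) (u : (E →L[ℂ] E)ˣ) : ℙ ℂ V → ℙ ℂ V :=
  Projectivization.map (((R.ρ u : (V →L[ℂ] V)ˣ) : V →L[ℂ] V) : V →ₗ[ℂ] V)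
    (unit_apply_injective _)

/-- The limit set `Lim(v) ⊆ ℙ(V)`: the union of the `ρ(K_Λ)`-orbits of all subsequential limits
of `[ρ(g_i⁻¹ A_i) v]`. -/
def LimSet (R : Rep Λ V) (A g : ℕ → (E →L[ℂ] E)ˣ) {v : V} (hv : v ≠ 0) :
    Set (ℙ ℂ V) :=
  {y | ∃ (w : V) (hw : w ≠ 0) (k : (E →L[ℂ] E)ˣ), InKΛ Λ k ∧
    y = Projectivization.mk ℂ ((R.ρ k : V →L[ℂ] V) w) (unit_apply_ne_zero _ hw) ∧
    ∃ φ : ℕ → ℕ, StrictMono φ ∧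
      Tendsto (fun j => Projectivization.mk ℂ
          ((R.ρ ((g (φ j))⁻¹ * A (φ j)) : V →L[ℂ] V) v) (unit_apply_ne_zero _ hv))
        atTop (𝓝 (Projectivization.mk ℂ w hw))}

/-- The eigenspace `U` of `Λ` with (real) eigenvalue `c`. -/
def eigU (Λ : E →L[ℂ] E) (c : ℝ) : Submodule ℂ E :=
  Module.End.eigenspace (Λ : E →ₗ[ℂ] E) (c : ℂ)

/-- The weight `d(v) = lim_i i⁻¹ log ‖A_i v‖` for the standard representation of `GL(E)` on `E`
(a junk value if the limit does not exist). -/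
def dstd (A : ℕ → (E →L[ℂ] E)ˣ) (v : E) : ℝ :=
  limUnder atTop fun i : ℕ => Real.log ‖(A i : E →L[ℂ] E) v‖ / i

/-- `p_s = Σ_{k ≤ s} n_k` where `n_k = dim U_k`. -/
def psum (Λ : E →L[ℂ] E) {r : ℕ} (lam : Fin r → ℝ) (s : Fin r) : ℕ :=
  ∑ k ∈ Finset.univ.filter (fun k => k ≤ s), Module.finrank ℂ (eigU Λ (lam k))

/-- `q_s = Σ_{k ≥ s} n_k` where `n_k = dim U_k`. -/
def qsum (Λ : E →L[ℂ] E) {r : ℕ} (lam : Fin r → ℝ) (s : Fin r) : ℕ :=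
  ∑ k ∈ Finset.univ.filter (fun k => s ≤ k), Module.finrank ℂ (eigU Λ (lam k))

/-- A model for the `p`-th exterior power of `E`, with its induced Hermitian metric
(determined by `⟨x₁∧⋯∧x_p, y₁∧⋯∧y_p⟩ = det(⟨x_i, y_j⟩)`), the induced representation of `GL(E)`,
and the induced self-adjoint operator (the derivation extension of `Λ`, pinned down by
`Rep.exp_eq` and equivariance of `wedge`). -/
structure ExtPower (Λ : E →L[ℂ] E) (p : ℕ) where
  P : Type
  [normed : NormedAddCommGroup P]
  [ips : InnerProductSpace ℂ P]
  [fd : FiniteDimensional ℂ P]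
  R : Rep Λ P
  wedge : E [⋀^Fin p]→ₗ[ℂ] P
  wedge_map : ∀ (u : (E →L[ℂ] E)ˣ) (x : Fin p → E),
    ((R.ρ u : (P →L[ℂ] P)ˣ) : P →L[ℂ] P) (wedge x) = wedge fun j => (u : E →L[ℂ] E) (x j)
  wedge_inner : ∀ x y : Fin p → E,
    (inner ℂ (wedge x) (wedge y) : ℂ) = (Matrix.of fun i j : Fin p => (inner ℂ (x i) (y j) : ℂ)).det
  wedge_span : Submodule.span ℂ (Set.range wedge) = ⊤

attribute [instance] ExtPower.normed ExtPower.ips ExtPower.fd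

/-- A bundle of the choices made in Section 2 of the paper: a gauge sequence `g` as in (*)',
the filtration `V_s` (with `V_{r+1} = 0`), complements `W_s` with `V_s = W_s ⊕ V_{s+1}` and
`Lim(W_s) = {[⋀^{n_s} U_s]}`, and identifications `C_i → Id` carrying `g_i⁻¹ A_i · W_s`
onto `U_s`. -/
structure Choices (A : ℕ → (E →L[ℂ] E)ˣ) (Λ : E →L[ℂ] E) (r : ℕ) (lam : Fin r → ℝ)
    (EP : ∀ p : ℕ, ExtPower Λ p) where
  g : ℕ → (E →L[ℂ] E)ˣ
  hg : CondStar' A Λ g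
  Vsub : Fin (r + 1) → Submodule ℂ E
  hVsub : ∀ s : Fin r, (Vsub s.castSucc : Set E) = {v : E | v = 0 ∨ dstd A v ≤ lam s}
  hVlast : Vsub (Fin.last r) = ⊥
  W : Fin r → Submodule ℂ E
  hW_sup : ∀ s : Fin r, W s ⊔ Vsub s.succ = Vsub s.castSucc
  hW_inf : ∀ s : Fin r, W s ⊓ Vsub s.succ = ⊥
  hW_lim : ∀ s : Fin r, ∀ b : Fin (Module.finrank ℂ (eigU Λ (lam s))) → E,
    LinearIndependent ℂ b → Submodule.span ℂ (Set.range b) = W s →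
    ∀ c : Fin (Module.finrank ℂ (eigU Λ (lam s))) → E,
    LinearIndependent ℂ c → Submodule.span ℂ (Set.range c) = eigU Λ (lam s) →
    ∃ (hb : (EP (Module.finrank ℂ (eigU Λ (lam s)))).wedge b ≠ 0)
      (hc : (EP (Module.finrank ℂ (eigU Λ (lam s)))).wedge c ≠ 0),
      LimSet (EP (Module.finrank ℂ (eigU Λ (lam s)))).R A g hb
        = {Projectivization.mk ℂ ((EP (Module.finrank ℂ (eigU Λ (lam s)))).wedge c) hc}
  C : ℕ → (E →L[ℂ] E)ˣ
  hC_lim : Tendsto (fun i => (C i : E →L[ℂ] E)) atTop (𝓝 1)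
  hC_map : ∀ (s : Fin r) (i : ℕ),
    Submodule.map ((((C i * (g i)⁻¹ * A i : (E →L[ℂ] E)ˣ) : E →L[ℂ] E) : E →ₗ[ℂ] E)) (W s)
      = eigU Λ (lam s)

/-- A model for the symmetric algebra `Sym(E*) = ⊕_k Sym^k(E*)` on the dual of `E`:
each graded piece is a Hermitian space carrying a compatible representation of `GL(E)`
(induced by the dual of the standard representation), `gen` identifies the degree-one piece
with `E*` equivariantly, and the product is bilinear, equivariant, has no zero divisors, and
together with the generators spans each graded piece. -/
structure SymModel (Λ : E →L[ℂ] E) where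
  P : ℕ → Type
  [normed : ∀ k, NormedAddCommGroup (P k)]
  [ips : ∀ k, InnerProductSpace ℂ (P k)]
  [fd : ∀ k, FiniteDimensional ℂ (P k)]
  R : ∀ k, Rep Λ (P k)
  mul : ∀ {k l : ℕ}, P k →ₗ[ℂ] P l →ₗ[ℂ] P (k + l)
  mul_equivariant : ∀ {k l : ℕ} (u : (E →L[ℂ] E)ˣ) (x : P k) (y : P l),
    (((R (k + l)).ρ u : (P (k + l) →L[ℂ] P (k + l))ˣ) : P (k + l) →L[ℂ] P (k + l)) (mul x y)
      = mul ((((R k).ρ u : (P k →L[ℂ] P k)ˣ) : P k →L[ℂ] P k) x)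
            ((((R l).ρ u : (P l →L[ℂ] P l)ˣ) : P l →L[ℂ] P l) y)
  mul_ne_zero : ∀ {k l : ℕ} {x : P k} {y : P l}, x ≠ 0 → y ≠ 0 → mul x y ≠ 0
  gen : (E →L[ℂ] ℂ) ≃ₗ[ℂ] P 1
  gen_equivariant : ∀ (u : (E →L[ℂ] E)ˣ) (l : E →L[ℂ] ℂ),
    (((R 1).ρ u : (P 1 →L[ℂ] P 1)ˣ) : P 1 →L[ℂ] P 1) (gen l)
      = gen (l.comp (((u⁻¹ : (E →L[ℂ] E)ˣ) : E →L[ℂ] E)))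
  span_gen_mul : ∀ k : ℕ, Submodule.span ℂ
      {z : P (k + 1) | ∃ (x : P k) (l : E →L[ℂ] ℂ), z = mul x (gen l)} = ⊤

attribute [instance] SymModel.normed SymModel.ips SymModel.fd

theorem exp_apply_eq (T : V →L[ℂ] V) (c : ℂ) (x : V) (h : T x = c • x) :
    exp T x = Complex.exp c • x := by
  have hpow : ∀ n : ℕ, (T ^ n) x = c ^ n • x := by
    intro n
    induction n with
    | zero => simp
    | succ n ih =>
      rw [pow_succ, ContinuousLinearMap.mul_apply, h, map_smul, ih, smul_smul, ← pow_succ']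
  have hsum : Summable fun n : ℕ => ((n.factorial : ℂ))⁻¹ • T ^ n := expSeries_summable' T
  have hsum2 : Summable fun n : ℕ => ((n.factorial : ℂ))⁻¹ * c ^ n := by
    simpa [smul_eq_mul] using expSeries_summable' (𝕂 := ℂ) c
  calc exp T x = (∑' n : ℕ, ((n.factorial : ℂ))⁻¹ • T ^ n) x := by rw [exp_eq_tsum ℂ]
    _ = ∑' n : ℕ, (((n.factorial : ℂ))⁻¹ • T ^ n) x := (ContinuousLinearMap.apply ℂ V x).map_tsum hsum
    _ = ∑' n : ℕ, (((n.factorial : ℂ))⁻¹ * c ^ n) • x := by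
        simp [ContinuousLinearMap.smul_apply, hpow, smul_smul]
    _ = (∑' n : ℕ, ((n.factorial : ℂ))⁻¹ * c ^ n) • x := hsum2.tsum_smul_const x
    _ = Complex.exp c • x := by
        rw [Complex.exp_eq_exp_ℂ, exp_eq_tsum ℂ]
        simp [smul_eq_mul]


/-- For a self-adjoint endomorphism `Λ` of a finite-dimensional complex inner
product space and any nonzero vector `v`, the function `t ↦ log ‖e^{tΛ} v‖` is convex on `ℝ`. -/
theorem logNormExp_convexOn (Λ : V →L[ℂ] V) (hΛ : IsSelfAdjoint Λ) (v : V) (hv : v ≠ 0) :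
    ConvexOn ℝ Set.univ (fun t : ℝ => Real.log ‖exp ((t : ℂ) • Λ) v‖) := by
  have hsym : (Λ : V →ₗ[ℂ] V).IsSymmetric :=
    (ContinuousLinearMap.isSelfAdjoint_iff_isSymmetric.mp hΛ)
  set n := Module.finrank ℂ V with hn
  let b : OrthonormalBasis (Fin n) ℂ V := hsym.eigenvectorBasis rfl
  let μ : Fin n → ℝ := hsym.eigenvalues rfl
  let a : Fin n → ℝ := fun i => ‖b.repr v i‖ ^ 2
  let S : ℝ → ℝ := fun t => ∑ i, a i * Real.exp (2 * μ i * t)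
  have ha : ∀ i, 0 ≤ a i := fun i => sq_nonneg _
  -- diagonal action of exp
  have heig : ∀ (t : ℝ) (i : Fin n),
      ((t : ℂ) • Λ) (b i) = ((t * μ i : ℝ) : ℂ) • b i := by
    intro t i
    have := hsym.apply_eigenvectorBasis rfl i
    rw [ContinuousLinearMap.smul_apply]
    rw [show Λ (b i) = ((μ i : ℝ) : ℂ) • b i from this]
    rw [smul_smul]
    push_cast
    ring_nf
  have key : ∀ t : ℝ, exp ((t : ℂ) • Λ) v
      = ∑ i, (Complex.exp ((t * μ i : ℝ) : ℂ) * b.repr v i) • b i := by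
    intro t
    conv_lhs => rw [← b.sum_repr v]
    rw [map_sum]
    refine Finset.sum_congr rfl fun i _ => ?_
    rw [map_smul, exp_apply_eq _ _ _ (heig t i), smul_smul, mul_comm]
  have hrepr : ∀ (t : ℝ) (j : Fin n),
      b.repr (exp ((t : ℂ) • Λ) v) j = Complex.exp ((t * μ j : ℝ) : ℂ) * b.repr v j := by
    intro t j
    rw [b.repr_apply_apply, key t, inner_sum]
    simp [inner_smul_right, orthonormal_iff_ite.mp b.orthonormal]
  have hnorm : ∀ t : ℝ, ‖exp ((t : ℂ) • Λ) v‖ ^ 2 = S t := by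
    intro t
    rw [← b.repr.norm_map, EuclideanSpace.norm_eq,
      Real.sq_sqrt (Finset.sum_nonneg fun i _ => sq_nonneg _)]
    refine Finset.sum_congr rfl fun i _ => ?_
    rw [hrepr t i]
    rw [norm_mul, mul_pow, Complex.norm_exp]
    simp only [Complex.ofReal_re]
    rw [sq (Real.exp _), ← Real.exp_add, show t * μ i + t * μ i = 2 * μ i * t by ring]
    ring
  have hSpos : ∀ t : ℝ, 0 < S t := by
    intro t
    rw [← hnorm t]
    have hne : exp ((t : ℂ) • Λ) v ≠ 0 := by
      intro h0
      apply hv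
      have hone : exp (-((t : ℂ) • Λ)) * exp ((t : ℂ) • Λ) = 1 := by
        letI : NormedAlgebra ℚ (V →L[ℂ] V) := .restrictScalars ℚ ℂ _
        rw [← exp_add_of_commute (Commute.refl ((t : ℂ) • Λ)).neg_left, neg_add_cancel, exp_zero]
      have hinv : exp (-((t : ℂ) • Λ)) (exp ((t : ℂ) • Λ) v) = v := by
        rw [← ContinuousLinearMap.mul_apply, hone, ContinuousLinearMap.one_apply]
      rw [h0, map_zero] at hinv
      exact hinv.symm
    exact pow_pos (norm_pos_iff.mpr hne) 2
  have hlog : ∀ t : ℝ, Real.log ‖exp ((t : ℂ) • Λ) v‖ = (1/2) * Real.log (S t) := by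
    intro t
    rw [← hnorm t, Real.log_pow]
    push_cast
    ring
  refine ⟨convex_univ, ?_⟩
  intro x _ y _ la lb hla hlb hlab
  simp only [smul_eq_mul, hlog]
  rcases eq_or_lt_of_le hla with h0 | hla'
  · have hlb1 : lb = 1 := by linarith
    simp [← h0, hlb1]
  rcases eq_or_lt_of_le hlb with h0 | hlb'
  · have hla1 : la = 1 := by linarith
    simp [← h0, hla1]
  have hpq : Real.HolderConjugate (1/la) (1/lb) := by
    constructor
    · rw [one_div, one_div, inv_inv, inv_inv, inv_one]
      exact hlab
    · positivity
    · positivity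
  set A : Fin n → ℝ := fun i => a i * Real.exp (2 * μ i * x) with hA
  set B : Fin n → ℝ := fun i => a i * Real.exp (2 * μ i * y) with hB
  have hAnn : ∀ i, 0 ≤ A i := fun i => mul_nonneg (ha i) (Real.exp_pos _).le
  have hBnn : ∀ i, 0 ≤ B i := fun i => mul_nonneg (ha i) (Real.exp_pos _).le
  have hterm : ∀ i, a i * Real.exp (2 * μ i * (la * x + lb * y)) = A i ^ la * B i ^ lb := by
    intro i
    rw [hA, hB]
    simp only []
    rw [Real.mul_rpow (ha i) (Real.exp_pos _).le, Real.mul_rpow (ha i) (Real.exp_pos _).le,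
      ← Real.exp_mul, ← Real.exp_mul]
    have haa : a i = a i ^ la * a i ^ lb := by
      rw [← Real.rpow_add' (ha i) (by rw [hlab]; norm_num), hlab, Real.rpow_one]
    calc a i * Real.exp (2 * μ i * (la * x + lb * y))
        = (a i ^ la * a i ^ lb) * Real.exp (2 * μ i * x * la + 2 * μ i * y * lb) := by
          rw [← haa]; ring_nf
      _ = a i ^ la * Real.exp (2 * μ i * x * la) * (a i ^ lb * Real.exp (2 * μ i * y * lb)) := by
          rw [Real.exp_add]; ring
  have holder := Real.inner_le_Lp_mul_Lq_of_nonneg (s := Finset.univ)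
    (f := fun i => A i ^ la) (g := fun i => B i ^ lb) hpq
    (fun i _ => Real.rpow_nonneg (hAnn i) la)
    (fun i _ => Real.rpow_nonneg (hBnn i) lb)
  have hAla : ∀ i : Fin n, (A i ^ la) ^ (1/la : ℝ) = A i := by
    intro i
    rw [← Real.rpow_mul (hAnn i), mul_one_div, div_self (ne_of_gt hla'), Real.rpow_one]
  have hBlb : ∀ i : Fin n, (B i ^ lb) ^ (1/lb : ℝ) = B i := by
    intro i
    rw [← Real.rpow_mul (hBnn i), mul_one_div, div_self (ne_of_gt hlb'), Real.rpow_one]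
  simp only [hAla, hBlb, one_div_one_div] at holder
  have hS : S (la * x + lb * y) ≤ S x ^ la * S y ^ lb := by
    have h1 : S (la * x + lb * y) = ∑ i, A i ^ la * B i ^ lb :=
      Finset.sum_congr rfl fun i _ => hterm i
    rw [h1]
    exact holder
  have hlogle := Real.log_le_log (hSpos _) hS
  rw [Real.log_mul (Real.rpow_pos_of_pos (hSpos x) la).ne' (Real.rpow_pos_of_pos (hSpos y) lb).ne',
    Real.log_rpow (hSpos x), Real.log_rpow (hSpos y)] at hlogle
  linarith


end CSW
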